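/- The k-module (ker 𝛋)/(im 𝛋) is free of rank 1, generated by the class of the identity element 1 ∈ B. (Combined with the computation of the homology of (A, κ), this says that the inclusion of the subcomplex (A, κ) into (B, 𝛋), where A ⊂ B is the subalgebra generated by ξ and ξ̄ with differential κ(ξ) = 0, κ(ξ̄) = ξ, is a quasi-isomorphism.) -/

import Mathlib

open scoped TensorProduct

noncomputable section

/-- The hyperbolic quadratic form `Q(x, y) = x * y` on `k × k`. -/
def hypQ (k : Type*) [CommRing k] : QuadraticForm k (k × k) :=
  QuadraticMap.linMulLin (LinearMap.fst k k k) (LinearMap.snd k k k)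

/-- `E`, the Clifford algebra of the hyperbolic plane over `k`. -/
abbrev CliffE (k : Type*) [CommRing k] := CliffordAlgebra (hypQ k)

/-- `r̄ ∈ E`, the image of the basis vector `(1, 0)`. -/
def rbar (k : Type*) [CommRing k] : CliffE k := CliffordAlgebra.ι (hypQ k) (1, 0)

/-- `ξ̄ ∈ E`, the image of the basis vector `(0, 1)`. -/
def xibar (k : Type*) [CommRing k] : CliffE k := CliffordAlgebra.ι (hypQ k) (0, 1)

/-- `B = k[r, ξ] ⊗ₖ E`. -/
abbrev BB (k : Type*) [CommRing k] := MvPolynomial (Fin 2) k ⊗[k] CliffE k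

/-- `r ∈ B`. -/
def rB (k : Type*) [CommRing k] : BB k := (MvPolynomial.X 0) ⊗ₜ[k] 1

/-- `ξ ∈ B`. -/
def xiB (k : Type*) [CommRing k] : BB k := (MvPolynomial.X 1) ⊗ₜ[k] 1

/-- `r̄ ∈ B`. -/
def rbarB (k : Type*) [CommRing k] : BB k := 1 ⊗ₜ[k] rbar k

/-- `ξ̄ ∈ B`. -/
def xibarB (k : Type*) [CommRing k] : BB k := 1 ⊗ₜ[k] xibar k

/-- `ω = r ξ̄ + ξ r̄ ∈ B`. -/
def omegaB (k : Type*) [CommRing k] : BB k := rB k * xibarB k + xiB k * rbarB k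

/-- `Θ = r ξ ∈ B`. -/
def thetaB (k : Type*) [CommRing k] : BB k := rB k * xiB k

/-- The `ℤ/2`-grading `B = B₀ ⊕ B₁` with `Bᵢ = k[r,ξ] ⊗ Eᵢ`, where `E = E₀ ⊕ E₁` is
the even/odd decomposition of the Clifford algebra `E`. -/
def Bgrade (k : Type*) [CommRing k] (i : ZMod 2) : Submodule k (BB k) :=
  Submodule.span k {z : BB k | ∃ (p : MvPolynomial (Fin 2) k) (e : CliffE k),
    e ∈ CliffordAlgebra.evenOdd (hypQ k) i ∧ z = p ⊗ₜ[k] e}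

namespace Aux
variable (k : Type*) [CommRing k]

lemma rbar_sq : rbar k * rbar k = 0 := by
  rw [rbar, CliffordAlgebra.ι_sq_scalar]
  rw [show hypQ k (1, 0) = 0 by simp [hypQ], map_zero]

lemma xibar_sq : xibar k * xibar k = 0 := by
  rw [xibar, CliffordAlgebra.ι_sq_scalar]
  rw [show hypQ k (0, 1) = 0 by simp [hypQ], map_zero]

lemma anticomm : rbar k * xibar k + xibar k * rbar k = 1 := by
  rw [rbar, xibar, CliffordAlgebra.ι_mul_ι_add_swap]
  rw [show QuadraticMap.polar (hypQ k) (1, 0) (0, 1) = 1 by simp [hypQ, QuadraticMap.polar],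
    map_one]

lemma xr : xibar k * rbar k = 1 - rbar k * xibar k :=
  eq_sub_of_add_eq' (anticomm k)

lemma xrx : xibar k * (rbar k * xibar k) = xibar k := by
  rw [← mul_assoc, xr, sub_mul, one_mul, mul_assoc, xibar_sq, mul_zero, sub_zero]

lemma rxr : (rbar k * xibar k) * rbar k = rbar k := by
  rw [mul_assoc, xr, mul_sub, mul_one, ← mul_assoc, rbar_sq, zero_mul, sub_zero]

lemma rrx : rbar k * (rbar k * xibar k) = 0 := by
  rw [← mul_assoc, rbar_sq, zero_mul]

lemma rxx : (rbar k * xibar k) * xibar k = 0 := by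
  rw [mul_assoc, xibar_sq, mul_zero]

lemma rxrx : (rbar k * xibar k) * (rbar k * xibar k) = rbar k * xibar k := by
  rw [← mul_assoc, rxr k]

end Aux

namespace Rep
variable (k : Type*) [CommRing k]

def M01 : Matrix (Fin 2) (Fin 2) k := Matrix.single 0 1 1
def M10 : Matrix (Fin 2) (Fin 2) k := Matrix.single 1 0 1

def fRep : (k × k) →ₗ[k] Matrix (Fin 2) (Fin 2) k :=
  (LinearMap.fst k k k).smulRight (M01 k) + (LinearMap.snd k k k).smulRight (M10 k)

lemma fRep_sq (m : k × k) : fRep k m * fRep k m = algebraMap k _ (hypQ k m) := by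
  ext i j
  fin_cases i <;> fin_cases j <;>
    simp [fRep, M01, M10, hypQ, Matrix.mul_apply, Fin.sum_univ_two,
      Matrix.single, Matrix.algebraMap_matrix_apply] <;> ring

def rho : CliffE k →ₐ[k] Matrix (Fin 2) (Fin 2) k :=
  CliffordAlgebra.lift (hypQ k) ⟨fRep k, fRep_sq k⟩

lemma rho_rbar : rho k (rbar k) = M01 k := by
  rw [rbar, rho, CliffordAlgebra.lift_ι_apply]
  simp [fRep]

lemma rho_xibar : rho k (xibar k) = M10 k := by
  rw [xibar, rho, CliffordAlgebra.lift_ι_apply]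
  simp [fRep]

lemma rho_w : rho k (rbar k * xibar k) = Matrix.single 0 0 1 := by
  rw [map_mul, rho_rbar, rho_xibar]
  ext i j
  fin_cases i <;> fin_cases j <;>
    simp [M01, M10, Matrix.mul_apply, Fin.sum_univ_two, Matrix.single]

end Rep

namespace Co
open Rep
variable (k : Type*) [CommRing k]

def ca : CliffE k →ₗ[k] k := Matrix.entryLinearMap k k 1 1 ∘ₗ (rho k).toLinearMap
def cr : CliffE k →ₗ[k] k := Matrix.entryLinearMap k k 0 1 ∘ₗ (rho k).toLinearMap
def cx : CliffE k →ₗ[k] k := Matrix.entryLinearMap k k 1 0 ∘ₗ (rho k).toLinearMap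
def cw : CliffE k →ₗ[k] k :=
  Matrix.entryLinearMap k k 0 0 ∘ₗ (rho k).toLinearMap - ca k

@[simp] lemma ca_one : ca k 1 = 1 := by simp [ca, Matrix.entryLinearMap_apply, Matrix.one_apply]
@[simp] lemma cr_one : cr k 1 = 0 := by simp [cr, Matrix.entryLinearMap_apply, Matrix.one_apply]
@[simp] lemma cx_one : cx k 1 = 0 := by simp [cx, Matrix.entryLinearMap_apply, Matrix.one_apply]
@[simp] lemma cw_one : cw k 1 = 0 := by
  simp [cw, ca, Matrix.entryLinearMap_apply, Matrix.one_apply]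

@[simp] lemma ca_rbar : ca k (rbar k) = 0 := by
  simp [ca, Matrix.entryLinearMap_apply, rho_rbar, M01, Matrix.single]
@[simp] lemma cr_rbar : cr k (rbar k) = 1 := by
  simp [cr, Matrix.entryLinearMap_apply, rho_rbar, M01, Matrix.single]
@[simp] lemma cx_rbar : cx k (rbar k) = 0 := by
  simp [cx, Matrix.entryLinearMap_apply, rho_rbar, M01, Matrix.single]
@[simp] lemma cw_rbar : cw k (rbar k) = 0 := by
  simp [cw, ca, Matrix.entryLinearMap_apply, rho_rbar, M01, Matrix.single]

@[simp] lemma ca_xibar : ca k (xibar k) = 0 := by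
  simp [ca, Matrix.entryLinearMap_apply, rho_xibar, M10, Matrix.single]
@[simp] lemma cr_xibar : cr k (xibar k) = 0 := by
  simp [cr, Matrix.entryLinearMap_apply, rho_xibar, M10, Matrix.single]
@[simp] lemma cx_xibar : cx k (xibar k) = 1 := by
  simp [cx, Matrix.entryLinearMap_apply, rho_xibar, M10, Matrix.single]
@[simp] lemma cw_xibar : cw k (xibar k) = 0 := by
  simp [cw, ca, Matrix.entryLinearMap_apply, rho_xibar, M10, Matrix.single]

@[simp] lemma ca_w : ca k (rbar k * xibar k) = 0 := by
  simp [ca, Matrix.entryLinearMap_apply, rho_w, Matrix.single]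
@[simp] lemma cr_w : cr k (rbar k * xibar k) = 0 := by
  simp [cr, Matrix.entryLinearMap_apply, rho_w, Matrix.single]
@[simp] lemma cx_w : cx k (rbar k * xibar k) = 0 := by
  simp [cx, Matrix.entryLinearMap_apply, rho_w, Matrix.single]
@[simp] lemma cw_w : cw k (rbar k * xibar k) = 1 := by
  simp [cw, ca, Matrix.entryLinearMap_apply, rho_w, Matrix.single]

end Co

namespace Sp
open Aux Co
variable (k : Type*) [CommRing k]

def gens : Set (CliffE k) := {1, rbar k, xibar k, rbar k * xibar k}

lemma mul_gens : ∀ a ∈ gens k, ∀ b ∈ gens k, a * b ∈ Submodule.span k (gens k) := by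
  have h1 : (1 : CliffE k) ∈ gens k := Or.inl rfl
  have h2 : rbar k ∈ gens k := Or.inr (Or.inl rfl)
  have h3 : xibar k ∈ gens k := Or.inr (Or.inr (Or.inl rfl))
  have h4 : rbar k * xibar k ∈ gens k := Or.inr (Or.inr (Or.inr rfl))
  intro a ha b hb
  rcases ha with rfl | rfl | rfl | rfl <;> rcases hb with rfl | rfl | rfl | rfl <;>
    (try simp only [one_mul, mul_one, rbar_sq, xibar_sq, xr, xrx, rxr, rrx, rxx, rxrx]) <;>
    first
      | exact Submodule.zero_mem _
      | exact Submodule.subset_span h1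
      | exact Submodule.subset_span h2
      | exact Submodule.subset_span h3
      | exact Submodule.subset_span h4
      | exact Submodule.sub_mem _ (Submodule.subset_span h1) (Submodule.subset_span h4)

lemma span_gens : Submodule.span k (gens k) = ⊤ := by
  rw [eq_top_iff]
  rintro x -
  induction x using CliffordAlgebra.induction with
  | algebraMap r =>
      rw [Algebra.algebraMap_eq_smul_one]
      exact Submodule.smul_mem _ _ (Submodule.subset_span (Or.inl rfl))
  | ι m =>
      have hm : CliffordAlgebra.ι (hypQ k) m = m.1 • rbar k + m.2 • xibar k := by
        rw [rbar, xibar, ← map_smul, ← map_smul, ← map_add]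
        congr 1
        refine Prod.ext ?_ ?_ <;> simp
      rw [hm]
      exact Submodule.add_mem _
        (Submodule.smul_mem _ _ (Submodule.subset_span (Or.inr (Or.inl rfl))))
        (Submodule.smul_mem _ _ (Submodule.subset_span (Or.inr (Or.inr (Or.inl rfl)))))
  | mul x y hx hy =>
      have h := Submodule.mul_mem_mul hx hy
      rw [Submodule.span_mul_span] at h
      refine Submodule.span_le.mpr ?_ h
      rintro z hz
      rw [Set.mem_mul] at hz
      obtain ⟨a, ha, b, hb, rfl⟩ := hz
      exact mul_gens k a ha b hb
  | add x y hx hy => exact Submodule.add_mem _ hx hy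

def D : CliffE k →ₗ[k] CliffE k :=
  (ca k).smulRight 1 + (cr k).smulRight (rbar k) + (cx k).smulRight (xibar k)
    + (cw k).smulRight (rbar k * xibar k)

lemma decompE (e : CliffE k) :
    e = ca k e • 1 + cr k e • rbar k + cx k e • xibar k + cw k e • (rbar k * xibar k) := by
  have hD : D k = LinearMap.id := by
    apply LinearMap.ext_on (span_gens k)
    rintro x (rfl | rfl | rfl | rfl) <;> simp [D]
  have := congrArg (fun f => f e) hD
  simpa [D] using this.symm

end Sp

namespace BS
open Co Sp MvPolynomial
variable (k : Type*) [CommRing k]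

def Phi (φ : CliffE k →ₗ[k] k) : BB k →ₗ[k] MvPolynomial (Fin 2) k :=
  (TensorProduct.rid k (MvPolynomial (Fin 2) k)).toLinearMap ∘ₗ
    TensorProduct.map LinearMap.id φ

@[simp] lemma Phi_tmul (φ : CliffE k →ₗ[k] k) (p : MvPolynomial (Fin 2) k) (e : CliffE k) :
    Phi k φ (p ⊗ₜ[k] e) = φ e • p := by
  simp [Phi]

lemma decompB (b : BB k) :
    b = (Phi k (ca k) b) ⊗ₜ[k] 1 + (Phi k (cr k) b) ⊗ₜ[k] rbar k
      + (Phi k (cx k) b) ⊗ₜ[k] xibar k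
      + (Phi k (cw k) b) ⊗ₜ[k] (rbar k * xibar k) := by
  have hD : ((TensorProduct.mk k (MvPolynomial (Fin 2) k) (CliffE k)).flip 1 ∘ₗ Phi k (ca k)
      + (TensorProduct.mk k (MvPolynomial (Fin 2) k) (CliffE k)).flip (rbar k) ∘ₗ Phi k (cr k)
      + (TensorProduct.mk k (MvPolynomial (Fin 2) k) (CliffE k)).flip (xibar k) ∘ₗ Phi k (cx k)
      + (TensorProduct.mk k (MvPolynomial (Fin 2) k) (CliffE k)).flip (rbar k * xibar k)
          ∘ₗ Phi k (cw k)) = LinearMap.id := by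
    apply TensorProduct.ext'
    intro p e
    simp only [LinearMap.add_apply, LinearMap.comp_apply, Phi_tmul, LinearMap.flip_apply,
      TensorProduct.mk_apply, LinearMap.id_apply, TensorProduct.smul_tmul']
    rw [TensorProduct.smul_tmul, TensorProduct.smul_tmul, TensorProduct.smul_tmul,
      TensorProduct.smul_tmul, ← TensorProduct.tmul_add, ← TensorProduct.tmul_add,
      ← TensorProduct.tmul_add, ← decompE k e]
  have := congrArg (fun f => f b) hD
  simpa using this.symm

end BS

namespace KA
open Aux MvPolynomial
variable (k : Type*) [CommRing k]

lemma mem0 (p : MvPolynomial (Fin 2) k) {e : CliffE k}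
    (he : e ∈ CliffordAlgebra.evenOdd (hypQ k) 0) : p ⊗ₜ[k] e ∈ Bgrade k 0 :=
  Submodule.subset_span ⟨p, e, he, rfl⟩

lemma mem1 (p : MvPolynomial (Fin 2) k) {e : CliffE k}
    (he : e ∈ CliffordAlgebra.evenOdd (hypQ k) 1) : p ⊗ₜ[k] e ∈ Bgrade k 1 :=
  Submodule.subset_span ⟨p, e, he, rfl⟩

lemma one_even : (1 : CliffE k) ∈ CliffordAlgebra.evenOdd (hypQ k) 0 :=
  SetLike.one_mem_graded _

lemma rbar_odd : rbar k ∈ CliffordAlgebra.evenOdd (hypQ k) 1 :=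
  CliffordAlgebra.ι_mem_evenOdd_one _ _

lemma xibar_odd : xibar k ∈ CliffordAlgebra.evenOdd (hypQ k) 1 :=
  CliffordAlgebra.ι_mem_evenOdd_one _ _

lemma w_even : rbar k * xibar k ∈ CliffordAlgebra.evenOdd (hypQ k) 0 :=
  CliffordAlgebra.ι_mul_ι_mem_evenOdd_zero _ _ _

lemma omegaB_eq : omegaB k = (X 0 : MvPolynomial (Fin 2) k) ⊗ₜ[k] xibar k
    + (X 1 : MvPolynomial (Fin 2) k) ⊗ₜ[k] rbar k := by
  simp [omegaB, rB, xiB, rbarB, xibarB, Algebra.TensorProduct.tmul_mul_tmul]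

variable (κB : BB k →ₗ[k] BB k)
    (h0 : ∀ b ∈ Bgrade k 0, κB b = omegaB k * b - b * omegaB k)
    (h1 : ∀ b ∈ Bgrade k 1, κB b = omegaB k * b + b * omegaB k)

include h0 in
lemma kap_one (p : MvPolynomial (Fin 2) k) : κB (p ⊗ₜ[k] 1) = 0 := by
  rw [h0 _ (mem0 k p (one_even k)), omegaB_eq]
  simp only [add_mul, mul_add, Algebra.TensorProduct.tmul_mul_tmul, one_mul, mul_one]
  rw [mul_comm (X 0) p, mul_comm (X 1) p]
  abel

include h1 in
lemma kap_rbar (p : MvPolynomial (Fin 2) k) :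
    κB (p ⊗ₜ[k] rbar k) = (X 0 * p) ⊗ₜ[k] 1 := by
  rw [h1 _ (mem1 k p (rbar_odd k)), omegaB_eq]
  simp only [add_mul, mul_add, Algebra.TensorProduct.tmul_mul_tmul, rbar_sq,
    TensorProduct.tmul_zero, mul_comm p (X 0), mul_comm p (X 1)]
  rw [add_zero, add_zero, ← TensorProduct.tmul_add, add_comm (xibar k * rbar k) (rbar k * xibar k),
    anticomm]

include h1 in
lemma kap_xibar (p : MvPolynomial (Fin 2) k) :
    κB (p ⊗ₜ[k] xibar k) = (X 1 * p) ⊗ₜ[k] 1 := by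
  rw [h1 _ (mem1 k p (xibar_odd k)), omegaB_eq]
  simp only [add_mul, mul_add, Algebra.TensorProduct.tmul_mul_tmul, xibar_sq,
    TensorProduct.tmul_zero, mul_comm p (X 0), mul_comm p (X 1)]
  rw [zero_add, zero_add, ← TensorProduct.tmul_add, anticomm]

include h0 in
lemma kap_w (p : MvPolynomial (Fin 2) k) :
    κB (p ⊗ₜ[k] (rbar k * xibar k))
      = (X 0 * p) ⊗ₜ[k] xibar k - (X 1 * p) ⊗ₜ[k] rbar k := by
  rw [h0 _ (mem0 k p (w_even k)), omegaB_eq]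
  simp only [add_mul, mul_add, sub_mul, mul_sub, Algebra.TensorProduct.tmul_mul_tmul,
    xrx, rrx, rxr, rxx, TensorProduct.tmul_zero, mul_comm p (X 0), mul_comm p (X 1)]
  abel

end KA

namespace PK
open MvPolynomial
variable (k : Type*) [CommRing k]

lemma K1 {q : MvPolynomial (Fin 2) k} (h : X 0 * q = 0) : q = 0 :=
  (isRegular_X (n := (0 : Fin 2))).left (by simpa using h)

lemma K2core {S : Type*} [CommRing S] {t : S} (ht : IsRegular t) {F G : Polynomial S}
    (h : Polynomial.X * F + Polynomial.C t * G = 0) :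
    ∃ q : Polynomial S, F = -(Polynomial.C t * q) ∧ G = Polynomial.X * q := by
  have h0 : t * G.coeff 0 = 0 := by
    have := congrArg (fun p => Polynomial.coeff p 0) h
    simpa [Polynomial.mul_coeff_zero] using this
  have hG0 : G.coeff 0 = 0 := ht.left (by simpa using h0)
  refine ⟨G.divX, ?_, ?_⟩
  · have hG : G = Polynomial.X * G.divX := by
      conv_lhs => rw [← Polynomial.X_mul_divX_add G, hG0]
      simp
    rw [hG] at h
    have h2 : Polynomial.X * (F + Polynomial.C t * G.divX) = 0 := by ring_nf; linear_combination h
    have h3 : F + Polynomial.C t * G.divX = 0 := Polynomial.isRegular_X.left (by simpa using h2)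
    linear_combination h3
  · have h4 := Polynomial.X_mul_divX_add G
    rw [hG0] at h4
    simpa using h4.symm

end PK

namespace PK2
open MvPolynomial
variable (k : Type*) [CommRing k]

lemma psi_X1 : (finSuccEquiv k 1) (X 1) = Polynomial.C (X 0) := by
  have : (1 : Fin 2) = Fin.succ 0 := rfl
  rw [this, finSuccEquiv_X_succ]

lemma K2 {p₁ p₂ : MvPolynomial (Fin 2) k} (h : X 0 * p₁ + X 1 * p₂ = 0) :
    ∃ q : MvPolynomial (Fin 2) k, p₁ = -(X 1 * q) ∧ p₂ = X 0 * q := by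
  have hh : Polynomial.X * (finSuccEquiv k 1) p₁
      + Polynomial.C (X 0 : MvPolynomial (Fin 1) k) * (finSuccEquiv k 1) p₂ = 0 := by
    have h2 := congrArg (finSuccEquiv k 1) h
    simpa [map_add, map_mul, finSuccEquiv_X_zero, psi_X1] using h2
  obtain ⟨q', hF, hG⟩ := PK.K2core (isRegular_X (n := (0 : Fin 1))) hh
  refine ⟨(finSuccEquiv k 1).symm q', ?_, ?_⟩
  · apply (finSuccEquiv k 1).injective
    rw [hF]
    simp [map_neg, map_mul, psi_X1]
  · apply (finSuccEquiv k 1).injective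
    rw [hG]
    simp [map_mul, finSuccEquiv_X_zero]

lemma K3 (p : MvPolynomial (Fin 2) k) :
    ∃ a b : MvPolynomial (Fin 2) k, p = C (constantCoeff p) + X 0 * a + X 1 * b := by
  induction p using MvPolynomial.induction_on with
  | C c => exact ⟨0, 0, by simp⟩
  | add p q hp hq =>
      obtain ⟨a, b, hp⟩ := hp
      obtain ⟨a', b', hq⟩ := hq
      exact ⟨a + a', b + b', by rw [map_add]; rw [map_add]; linear_combination hp + hq⟩
  | mul_X p n _ =>
      fin_cases n
      · exact ⟨p, 0, by simp [mul_comm]⟩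
      · exact ⟨0, p, by simp [mul_comm]⟩

end PK2

/-- The `k`-module `(ker 𝛋)/(im 𝛋)` is free of rank 1, generated by the class of
the identity element `1 ∈ B`: the identity is a cycle, every cycle is congruent
modulo boundaries to a unique multiple of `1`. -/
theorem stmt_8 (k : Type*) [CommRing k] (κB : BB k →ₗ[k] BB k)
    (h0 : ∀ b ∈ Bgrade k 0, κB b = omegaB k * b - b * omegaB k)
    (h1 : ∀ b ∈ Bgrade k 1, κB b = omegaB k * b + b * omegaB k) :
    κB 1 = 0 ∧
    (∀ b : BB k, κB b = 0 →
      ∃ (c : k) (y : BB k), b = c • (1 : BB k) + κB y) ∧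
    (∀ c : k, (∃ y : BB k, c • (1 : BB k) = κB y) → c = 0) := by
  have hkgen : ∀ q0 q1 q2 q3 : MvPolynomial (Fin 2) k,
      κB (q0 ⊗ₜ[k] 1 + q1 ⊗ₜ[k] rbar k + q2 ⊗ₜ[k] xibar k
          + q3 ⊗ₜ[k] (rbar k * xibar k))
        = (MvPolynomial.X 0 * q1 + MvPolynomial.X 1 * q2) ⊗ₜ[k] (1 : CliffE k)
          + (MvPolynomial.X 0 * q3) ⊗ₜ[k] xibar k - (MvPolynomial.X 1 * q3) ⊗ₜ[k] rbar k := by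
    intro q0 q1 q2 q3
    rw [map_add, map_add, map_add, KA.kap_one k κB h0, KA.kap_rbar k κB h1,
      KA.kap_xibar k κB h1, KA.kap_w k κB h0, TensorProduct.add_tmul]
    abel
  have honeB : ∀ c : k, c • (1 : BB k) = (MvPolynomial.C c : MvPolynomial (Fin 2) k) ⊗ₜ[k] (1 : CliffE k) := by
    intro c
    rw [Algebra.TensorProduct.one_def, TensorProduct.smul_tmul']
    congr 1
    rw [MvPolynomial.smul_eq_C_mul, mul_one]
  refine ⟨?_, ?_, ?_⟩
  · rw [Algebra.TensorProduct.one_def]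
    exact KA.kap_one k κB h0 1
  · intro b hb
    set p0 := BS.Phi k (Co.ca k) b with hp0
    set p1 := BS.Phi k (Co.cr k) b with hp1
    set p2 := BS.Phi k (Co.cx k) b with hp2
    set p3 := BS.Phi k (Co.cw k) b with hp3
    have hdec : b = p0 ⊗ₜ[k] 1 + p1 ⊗ₜ[k] rbar k + p2 ⊗ₜ[k] xibar k
        + p3 ⊗ₜ[k] (rbar k * xibar k) := BS.decompB k b
    rw [hdec, hkgen] at hb
    have e1 : MvPolynomial.X 0 * p1 + MvPolynomial.X 1 * p2 = 0 := by
      have := congrArg (BS.Phi k (Co.ca k)) hb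
      simpa using this
    have e2 : MvPolynomial.X 0 * p3 = 0 := by
      have := congrArg (BS.Phi k (Co.cx k)) hb
      simpa using this
    have e3 : p3 = 0 := PK.K1 k e2
    obtain ⟨q, hq1, hq2⟩ := PK2.K2 k e1
    obtain ⟨a, b', hab⟩ := PK2.K3 k p0
    set c0 := MvPolynomial.constantCoeff p0 with hc0
    refine ⟨c0,
      a ⊗ₜ[k] rbar k + b' ⊗ₜ[k] xibar k + q ⊗ₜ[k] (rbar k * xibar k), ?_⟩
    have hky : κB (a ⊗ₜ[k] rbar k + b' ⊗ₜ[k] xibar k + q ⊗ₜ[k] (rbar k * xibar k))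
        = (MvPolynomial.X 0 * a) ⊗ₜ[k] (1 : CliffE k) + (MvPolynomial.X 1 * b') ⊗ₜ[k] (1 : CliffE k)
          + ((MvPolynomial.X 0 * q) ⊗ₜ[k] xibar k - (MvPolynomial.X 1 * q) ⊗ₜ[k] rbar k) := by
      rw [map_add, map_add, KA.kap_rbar k κB h1, KA.kap_xibar k κB h1, KA.kap_w k κB h0]
    rw [hky, hdec, e3, hq1, hq2, hab, honeB]
    rw [TensorProduct.add_tmul, TensorProduct.add_tmul, TensorProduct.neg_tmul,
      TensorProduct.zero_tmul]
    abel
  · rintro c ⟨y, hy⟩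
    set q0 := BS.Phi k (Co.ca k) y with hq0
    set q1 := BS.Phi k (Co.cr k) y with hq1
    set q2 := BS.Phi k (Co.cx k) y with hq2
    set q3 := BS.Phi k (Co.cw k) y with hq3
    have hdec : y = q0 ⊗ₜ[k] 1 + q1 ⊗ₜ[k] rbar k + q2 ⊗ₜ[k] xibar k
        + q3 ⊗ₜ[k] (rbar k * xibar k) := BS.decompB k y
    rw [hdec, hkgen, honeB] at hy
    have e1 : (MvPolynomial.C c : MvPolynomial (Fin 2) k) = MvPolynomial.X 0 * q1 + MvPolynomial.X 1 * q2 := by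
      have := congrArg (BS.Phi k (Co.ca k)) hy
      simpa using this
    have := congrArg MvPolynomial.constantCoeff e1
    simpa using this
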